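/- For every integer n ≥ 2, β_n is a Perron number: it is an algebraic integer greater than 1, and every other complex root γ of its minimal polynomial satisfies |γ| < β_n. -/

import Mathlib

open Polynomial

private lemma monic_aux (n : ℕ) (hn : 2 ≤ n) (R : Type*) [CommRing R] [Nontrivial R] :
    (X ^ n - X - C 1 : R[X]).Monic := by
  have h : (X ^ n - X - C 1 : R[X]) = X ^ n - (X + C 1) := by ring
  rw [h]
  refine monic_X_pow_sub ?_
  refine lt_of_le_of_lt (degree_add_le _ _) ?_
  rw [max_lt_iff]
  constructor
  · rw [degree_X]
    exact_mod_cast (by omega : 1 < n)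
  · refine lt_of_le_of_lt degree_C_le ?_
    exact_mod_cast (by omega : 0 < n)

private lemma gap_aux (n : ℕ) (hn : 2 ≤ n) (b t : ℝ) (hb : 1 < b) (hbt : b < t) :
    b ^ n - b < t ^ n - t := by
  have h1 : (∑ i ∈ Finset.range n, t ^ i * b ^ (n - 1 - i)) * (t - b) = t ^ n - b ^ n :=
    geom_sum₂_mul t b n
  have hterm : ∀ i ∈ Finset.range n, (1 : ℝ) ≤ t ^ i * b ^ (n - 1 - i) := by
    intro i _
    have h2 : (1 : ℝ) ≤ t ^ i := one_le_pow₀ (by linarith)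
    have h3 : (1 : ℝ) ≤ b ^ (n - 1 - i) := one_le_pow₀ (by linarith)
    nlinarith
  have hsum : (n : ℝ) ≤ ∑ i ∈ Finset.range n, t ^ i * b ^ (n - 1 - i) := by
    calc (n : ℝ) = ∑ _i ∈ Finset.range n, (1 : ℝ) := by simp
    _ ≤ _ := Finset.sum_le_sum hterm
  have h2n : (2 : ℝ) ≤ (n : ℝ) := by exact_mod_cast hn
  nlinarith

/-- For every integer `n ≥ 2`, the real root `β_n > 1` of `x^n - x - 1` is a
Perron number: it is an algebraic integer greater than `1`, and every complex
root of its minimal polynomial other than `β_n` itself has absolute value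
strictly less than `β_n`. -/
theorem beta_is_perron (n : ℕ) (hn : 2 ≤ n) (b : ℝ)
    (hb : 1 < b) (hroot : b ^ n - b - 1 = 0) :
    IsIntegral ℤ b ∧
      ∀ z : ℂ, Polynomial.aeval z (minpoly ℚ b) = 0 → z ≠ (b : ℂ) →
        ‖z‖ < b := by
  have hint : IsIntegral ℤ b := by
    refine ⟨X ^ n - X - C 1, monic_aux n hn ℤ, ?_⟩
    simp [hroot]
  refine ⟨hint, ?_⟩
  intro z hz hzb
  -- z is a root of X^n - X - 1 over ℚ
  have hqroot : aeval b (X ^ n - X - C 1 : ℚ[X]) = 0 := by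
    simp [hroot]
  have hintQ : IsIntegral ℚ b := ⟨X ^ n - X - C 1, monic_aux n hn ℚ, hqroot⟩
  have hdvd : minpoly ℚ b ∣ (X ^ n - X - C 1 : ℚ[X]) := minpoly.dvd ℚ b hqroot
  obtain ⟨r, hr⟩ := hdvd
  have hzroot : z ^ n - z - 1 = 0 := by
    have : aeval z (X ^ n - X - C 1 : ℚ[X]) = 0 := by
      rw [hr, map_mul, hz, zero_mul]
    simpa using this
  have hbn : b ^ n = b + 1 := by linarith
  have hzn : z ^ n = z + 1 := by linear_combination hzroot
  set t := ‖z‖ with ht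
  have htle : t ^ n ≤ t + 1 := by
    calc t ^ n = ‖z ^ n‖ := by rw [norm_pow]
    _ = ‖z + 1‖ := by rw [hzn]
    _ ≤ ‖z‖ + ‖(1 : ℂ)‖ := norm_add_le _ _
    _ = t + 1 := by simp [ht]
  have hle : t ≤ b := by
    by_contra hc
    push_neg at hc
    have := gap_aux n hn b t hb hc
    rw [hbn] at this
    linarith
  rcases lt_or_eq_of_le hle with h | h
  · exact h
  -- equality case: |z| = b forces z = b
  exfalso
  have habs1 : ‖z + 1‖ = t + 1 := by
    have h1 : ‖z + 1‖ = t ^ n := by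
      rw [← hzn, norm_pow]
    rw [h1, h, hbn, ← h]
  have hsq : (z.re + 1) ^ 2 + z.im ^ 2 = (t + 1) ^ 2 := by
    have := congrArg (· ^ 2) habs1
    change ‖z + 1‖ ^ 2 = (t + 1) ^ 2 at this
    rw [Complex.sq_norm, Complex.normSq_apply] at this
    simp only [Complex.add_re, Complex.add_im, Complex.one_re, Complex.one_im] at this
    nlinarith [this]
  have hsq2 : z.re ^ 2 + z.im ^ 2 = t ^ 2 := by
    rw [ht, Complex.sq_norm, Complex.normSq_apply]; ring
  have hre : z.re = t := by nlinarith
  have him : z.im = 0 := by nlinarith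
  apply hzb
  apply Complex.ext
  · simp [hre, h]
  · simp [him]
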